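/- (Welch bound) Let N > M ≥ 1 and let φ_1, ..., φ_N be unit vectors in ℂ^M. Then the coherence satisfies max_{j ≠ l} |⟨φ_j, φ_l⟩| ≥ √((N − M)/(M(N − 1))). -/

import Mathlib

open Finset in
theorem sum4_comm {α β : Type*} [Fintype α] [Fintype β] (f : α → α → β → β → ℂ) :
    ∑ x, ∑ y, ∑ i, ∑ j, f x y i j = ∑ i, ∑ j, ∑ x, ∑ y, f x y i j :=
  calc ∑ x, ∑ y, ∑ i, ∑ j, f x y i j
      = ∑ x, ∑ i, ∑ y, ∑ j, f x y i j :=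
        Finset.sum_congr rfl fun _ _ => Finset.sum_comm
    _ = ∑ i, ∑ x, ∑ y, ∑ j, f x y i j := Finset.sum_comm
    _ = ∑ i, ∑ x, ∑ j, ∑ y, f x y i j :=
        Finset.sum_congr rfl fun _ _ => Finset.sum_congr rfl fun _ _ => Finset.sum_comm
    _ = ∑ i, ∑ j, ∑ x, ∑ y, f x y i j := Finset.sum_congr rfl fun _ _ => Finset.sum_comm

/-- (Welch bound.) For `N > M ≥ 1` and unit vectors
`φ_1, ..., φ_N` in `ℂ^M`, the coherence satisfies
`max_{j ≠ l} |⟨φ_j, φ_l⟩| ≥ √((N - M)/(M(N - 1)))`. -/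
theorem welch_bound {M N : ℕ} (hM : 1 ≤ M) (hNM : M < N)
    (φ : Fin N → EuclideanSpace ℂ (Fin M))
    (hunit : ∀ j, ‖φ j‖ = 1) :
    ∃ j l, j ≠ l ∧
      Real.sqrt (((N : ℝ) - M) / (M * ((N : ℝ) - 1))) ≤ ‖(inner ℂ (φ j) (φ l) : ℂ)‖ := by
  classical
  have hN2 : 2 ≤ N := lt_of_le_of_lt hM hNM
  set A : Fin M → Fin M → ℂ := fun a b => ∑ j, (starRingEnd ℂ) (φ j a) * φ j b with hA
  -- key complex identity
  have key : ∑ j, ∑ l, (inner ℂ (φ j) (φ l) : ℂ) * (starRingEnd ℂ) (inner ℂ (φ j) (φ l) : ℂ)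
      = ∑ a, ∑ b, A a b * (starRingEnd ℂ) (A a b) := by
    simp only [PiLp.inner_apply, RCLike.inner_apply, map_sum, map_mul,
      RingHomCompTriple.comp_apply, Complex.conj_conj, Finset.sum_mul_sum, RingHom.id_apply, hA]
    rw [sum4_comm]
    refine Finset.sum_congr rfl fun a _ => Finset.sum_congr rfl fun b _ =>
      Finset.sum_congr rfl fun x _ => Finset.sum_congr rfl fun y _ => by ring
  -- real version
  have keyR : ∑ j, ∑ l, ‖(inner ℂ (φ j) (φ l) : ℂ)‖ ^ 2 = ∑ a, ∑ b, ‖A a b‖ ^ 2 := by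
    have h := key
    simp only [Complex.mul_conj'] at h
    exact_mod_cast h
  -- trace
  have trace : ∑ a, A a a = (N : ℂ) := by
    simp only [hA]
    rw [Finset.sum_comm]
    have : ∀ j : Fin N, ∑ a, (starRingEnd ℂ) (φ j a) * φ j a = 1 := by
      intro j
      have : (inner ℂ (φ j) (φ j) : ℂ) = ((‖φ j‖ : ℂ)) ^ 2 := inner_self_eq_norm_sq_to_K _
      rw [PiLp.inner_apply] at this
      simpa [hunit j, RCLike.inner_apply, Complex.conj_mul'] using this
    simp [this]
  have traceR : ∑ a, (A a a).re = (N : ℝ) := by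
    have := congrArg Complex.re trace
    simpa [Complex.re_sum] using this
  -- Cauchy-Schwarz step
  have hCS : (N : ℝ) ^ 2 ≤ (M : ℝ) * ∑ a, ∑ b, ‖A a b‖ ^ 2 := by
    have h1 : (∑ a, (A a a).re) ^ 2 ≤ (Finset.univ : Finset (Fin M)).card * ∑ a, (A a a).re ^ 2 :=
      sq_sum_le_card_mul_sum_sq
    have h2 : ∑ a, (A a a).re ^ 2 ≤ ∑ a, ∑ b, ‖A a b‖ ^ 2 := by
      refine Finset.sum_le_sum fun a _ => ?_
      have hle : (A a a).re ^ 2 ≤ ‖A a a‖ ^ 2 := by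
        have h1' := Complex.abs_re_le_norm (A a a)
        have h0 : ‖A a a‖ = ‖A a a‖ := rfl
        calc (A a a).re ^ 2 = |(A a a).re| ^ 2 := (sq_abs _).symm
          _ ≤ ‖A a a‖ ^ 2 := pow_le_pow_left₀ (abs_nonneg _) h1' 2
          _ = ‖A a a‖ ^ 2 := by rw [h0]
      calc (A a a).re ^ 2 ≤ ‖A a a‖ ^ 2 := hle
        _ ≤ ∑ b, ‖A a b‖ ^ 2 :=
          Finset.single_le_sum (f := fun b => ‖A a b‖ ^ 2) (fun b _ => by positivity)
            (Finset.mem_univ a)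
    calc (N : ℝ) ^ 2 = (∑ a, (A a a).re) ^ 2 := by rw [traceR]
      _ ≤ (Finset.univ : Finset (Fin M)).card * ∑ a, (A a a).re ^ 2 := h1
      _ = (M : ℝ) * ∑ a, (A a a).re ^ 2 := by simp
      _ ≤ (M : ℝ) * ∑ a, ∑ b, ‖A a b‖ ^ 2 := by
          apply mul_le_mul_of_nonneg_left h2 (by positivity)
  -- split into diag and offdiag
  have hsplit : ∑ j, ∑ l, ‖(inner ℂ (φ j) (φ l) : ℂ)‖ ^ 2
      = (N : ℝ) + ∑ p ∈ Finset.univ.offDiag, ‖(inner ℂ (φ p.1) (φ p.2) : ℂ)‖ ^ 2 := by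
    rw [← Finset.sum_product' (s := Finset.univ) (t := Finset.univ)]
    rw [← Finset.diag_union_offDiag Finset.univ,
      Finset.sum_union (Finset.disjoint_diag_offDiag _), Finset.sum_diag]
    congr 1
    have : ∀ j : Fin N, ‖(inner ℂ (φ j) (φ j) : ℂ)‖ ^ 2 = 1 := by
      intro j
      have : (inner ℂ (φ j) (φ j) : ℂ) = ((‖φ j‖ : ℂ)) ^ 2 := inner_self_eq_norm_sq_to_K _
      rw [this, hunit j]
      norm_num
    exact (Finset.sum_congr rfl fun j _ => this j).trans (by simp)
  -- pick maximizing pair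
  have hne : (Finset.univ.offDiag : Finset (Fin N × Fin N)).Nonempty := by
    refine ⟨(⟨0, by omega⟩, ⟨1, by omega⟩), Finset.mem_offDiag.mpr ⟨Finset.mem_univ _, Finset.mem_univ _, ?_⟩⟩
    simp [Fin.ext_iff]
  obtain ⟨p, hp, hmax⟩ := Finset.exists_max_image Finset.univ.offDiag
    (fun p => ‖(inner ℂ (φ p.1) (φ p.2) : ℂ)‖) hne
  set μ := ‖(inner ℂ (φ p.1) (φ p.2) : ℂ)‖ with hμ
  have hμ0 : 0 ≤ μ := norm_nonneg _
  have hoffle : ∑ q ∈ Finset.univ.offDiag, ‖(inner ℂ (φ q.1) (φ q.2) : ℂ)‖ ^ 2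
      ≤ ((N : ℝ) * N - N) * μ ^ 2 := by
    calc ∑ q ∈ Finset.univ.offDiag, ‖(inner ℂ (φ q.1) (φ q.2) : ℂ)‖ ^ 2
        ≤ ∑ _q ∈ Finset.univ.offDiag, μ ^ 2 :=
          Finset.sum_le_sum fun q hq => pow_le_pow_left₀ (norm_nonneg _) (hmax q hq) 2
      _ = (Finset.univ.offDiag.card : ℝ) * μ ^ 2 := by rw [Finset.sum_const, nsmul_eq_mul]
      _ = ((N : ℝ) * N - N) * μ ^ 2 := by
          rw [Finset.offDiag_card]
          congr 1
          have hle : N ≤ N * N := Nat.le_mul_of_pos_left N (by omega)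
          simp only [Finset.card_univ, Fintype.card_fin]
          rw [Nat.cast_sub hle, Nat.cast_mul]
  -- final arithmetic
  have hfin : (N : ℝ) ^ 2 ≤ (M : ℝ) * ((N : ℝ) + ((N : ℝ) * N - N) * μ ^ 2) := by
    calc (N : ℝ) ^ 2 ≤ (M : ℝ) * ∑ a, ∑ b, ‖A a b‖ ^ 2 := hCS
      _ = (M : ℝ) * ∑ j, ∑ l, ‖(inner ℂ (φ j) (φ l) : ℂ)‖ ^ 2 := by rw [keyR]
      _ ≤ (M : ℝ) * ((N : ℝ) + ((N : ℝ) * N - N) * μ ^ 2) := by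
          apply mul_le_mul_of_nonneg_left _ (by positivity)
          rw [hsplit]
          linarith [hoffle]
  have hMR : (1 : ℝ) ≤ M := by exact_mod_cast hM
  have hNR : (M : ℝ) < N := by exact_mod_cast hNM
  have hN2R : (2 : ℝ) ≤ N := by exact_mod_cast hN2
  have hμ2 : ((N : ℝ) - M) / ((M : ℝ) * ((N : ℝ) - 1)) ≤ μ ^ 2 := by
    rw [div_le_iff₀ (by nlinarith)]
    nlinarith [hfin, sq_nonneg μ]
  refine ⟨p.1, p.2, (Finset.mem_offDiag.mp hp).2.2, ?_⟩
  calc Real.sqrt (((N : ℝ) - M) / ((M : ℝ) * ((N : ℝ) - 1)))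
      ≤ Real.sqrt (μ ^ 2) := Real.sqrt_le_sqrt hμ2
    _ = μ := by rw [Real.sqrt_sq hμ0]
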